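/- For every integer n ≥ 2: maxp_5(n) = 5^(n/4) if n ≡ 0 (mod 4), maxp_5(n) = 6 · 5^((n-5)/4) if n ≡ 1 (mod 4), maxp_5(n) = 2 · 5^((n-2)/4) if n ≡ 2 (mod 4), and maxp_5(n) = 3 · 5^((n-3)/4) if n ≡ 3 (mod 4). -/
import Mathlib


/-- `pk k n` is the number of `k`-regular partitions of `n`,
i.e. partitions of `n` in which no part is divisible by `k`. -/
noncomputable def pk (k n : ℕ) : ℕ :=
  Fintype.card {μ : n.Partition // ∀ i ∈ μ.parts, ¬ k ∣ i}


/-- Extension of `pk k` to partitions: the product of `pk k` over the parts. -/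
noncomputable def pkext (k : ℕ) {n : ℕ} (μ : n.Partition) : ℕ :=
  (μ.parts.map (pk k)).prod



def Np (n s : ℕ) : ℕ :=
  (Finset.univ.filter
    (fun μ : n.Partition => (∀ i ∈ μ.parts, ¬ 5 ∣ i) ∧ ∀ i ∈ μ.parts, s ≤ i)).card

lemma pk_eq_Np (n : ℕ) : pk 5 n = Np n 1 := by
  unfold pk Np
  rw [Fintype.card_subtype]
  congr 1
  apply Finset.filter_congr
  intro μ _
  constructor
  · exact fun h => ⟨h, fun i hi => μ.parts_pos hi⟩
  · exact fun h => h.1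

def wit (n q : ℕ) (M : Multiset ℕ) (hpos : ∀ i ∈ M, 0 < i) (h : M.sum + 4*q = n) :
    n.Partition where
  parts := M + Multiset.replicate q 4
  parts_pos := by
    intro i hi
    rcases Multiset.mem_add.mp hi with h1 | h1
    · exact hpos i h1
    · rw [Multiset.eq_of_mem_replicate h1]; norm_num
  parts_sum := by
    rw [Multiset.sum_add, Multiset.sum_replicate, smul_eq_mul]
    omega

lemma wit_reg (n q : ℕ) (M : Multiset ℕ) (hpos : ∀ i ∈ M, 0 < i) (h : M.sum + 4*q = n)
    (hM : ∀ i ∈ M, ¬ 5 ∣ i) : ∀ i ∈ (wit n q M hpos h).parts, ¬ 5 ∣ i := by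
  intro i hi
  rcases Multiset.mem_add.mp hi with h1 | h1
  · exact hM i h1
  · rw [Multiset.eq_of_mem_replicate h1]; norm_num

lemma pkext_wit (n q : ℕ) (M : Multiset ℕ) (hpos : ∀ i ∈ M, 0 < i) (h : M.sum + 4*q = n) :
    pkext 5 (wit n q M hpos h) = (M.map (pk 5)).prod * (pk 5 4)^q := by
  unfold pkext wit
  rw [Multiset.map_add, Multiset.prod_add, Multiset.map_replicate, Multiset.prod_replicate]


def cc : ℕ → ℕ
  | 0 => 1 | 1 => 1 | 2 => 2 | 3 => 3 | 4 => 5 | 5 => 6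
  | (n+6) => 5 * cc (n+2)

lemma cc_six (n : ℕ) : cc (n+6) = 5 * cc (n+2) := rfl

lemma cc_add4 (n : ℕ) (h : 2 ≤ n) : cc (n+4) = 5 * cc n := by
  obtain ⟨m, rfl⟩ : ∃ m, n = m + 2 := ⟨n - 2, by omega⟩
  exact cc_six m

lemma cc_pos (n : ℕ) : 1 ≤ cc n := by
  induction n using Nat.strong_induction_on with
  | _ n IH =>
    match n with
    | 0 | 1 | 2 | 3 | 4 | 5 => decide
    | (m+6) => rw [cc_six]; have := IH (m+2) (by omega); omega

lemma cc_le_succ (n : ℕ) : cc n ≤ cc (n+1) := by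
  induction n using Nat.strong_induction_on with
  | _ n IH =>
    match n with
    | 0 | 1 | 2 | 3 | 4 | 5 => decide
    | (m+6) =>
      have h1 : cc (m+6) = 5 * cc (m+2) := rfl
      have h2 : cc (m+6+1) = 5 * cc (m+2+1) := cc_six (m+1)
      have := IH (m+2) (by omega)
      omega

lemma cc_mono : Monotone cc := monotone_nat_of_le_succ cc_le_succ

lemma cc_super (a b : ℕ) : cc a * cc b ≤ cc (a + b) := by
  have key : ∀ n a b, a + b = n → cc a * cc b ≤ cc (a + b) := by
    intro n
    induction n using Nat.strong_induction_on with
    | _ n IH =>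
      intro a b h
      rcases le_or_gt a 5 with ha | ha
      · rcases le_or_gt b 5 with hb | hb
        · interval_cases a <;> interval_cases b <;> decide
        · obtain ⟨m, rfl⟩ : ∃ m, b = m + 6 := ⟨b - 6, by omega⟩
          rw [cc_six]
          have h2 : cc (a + (m+6)) = 5 * cc (a + (m + 2)) := by
            have h3 : a + (m+6) = (a + (m+2)) + 4 := by omega
            rw [h3, cc_add4 _ (by omega)]
          rw [h2]
          have := IH (a + (m+2)) (by omega) a (m+2) rfl
          nlinarith
      · obtain ⟨m, rfl⟩ : ∃ m, a = m + 6 := ⟨a - 6, by omega⟩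
        rw [cc_six]
        have h2 : cc ((m+6) + b) = 5 * cc ((m + 2) + b) := by
          have h3 : (m+6) + b = ((m+2) + b) + 4 := by omega
          rw [h3, cc_add4 _ (by omega)]
        rw [h2]
        have := IH ((m+2) + b) (by omega) (m+2) b rfl
        nlinarith
  exact key (a+b) a b rfl
def tabL : List (List Nat) := [
  [1, 1],
  [1, 1, 0],
  [2, 2, 1, 0],
  [3, 3, 1, 1, 0],
  [5, 5, 2, 1, 1, 0],
  [6, 6, 1, 0, 0, 0, 0],
  [10, 10, 4, 2, 1, 1, 1, 0],
  [13, 13, 3, 2, 1, 1, 1, 1, 0],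
  [19, 19, 6, 2, 2, 1, 1, 1, 1, 0],
  [25, 25, 6, 3, 1, 1, 1, 1, 1, 1, 0],
  [34, 34, 9, 3, 1, 0, 0, 0, 0, 0, 0, 0],
  [44, 44, 10, 4, 2, 1, 1, 1, 1, 1, 1, 1, 0],
  [60, 60, 16, 7, 4, 2, 2, 1, 1, 1, 1, 1, 1, 0],
  [76, 76, 16, 6, 3, 2, 2, 1, 1, 1, 1, 1, 1, 1, 0],
  [100, 100, 24, 8, 4, 3, 3, 2, 1, 1, 1, 1, 1, 1, 1, 0],
  [127, 127, 27, 11, 4, 2, 2, 1, 0, 0, 0, 0, 0, 0, 0, 0, 0],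
  [164, 164, 37, 13, 7, 3, 3, 3, 2, 1, 1, 1, 1, 1, 1, 1, 1, 0],
  [205, 205, 41, 14, 6, 3, 3, 2, 2, 1, 1, 1, 1, 1, 1, 1, 1, 1, 0],
  [262, 262, 57, 20, 9, 5, 5, 3, 2, 2, 1, 1, 1, 1, 1, 1, 1, 1, 1, 0],
  [325, 325, 63, 22, 9, 5, 5, 3, 2, 1, 1, 1, 1, 1, 1, 1, 1, 1, 1, 1, 0],
  [409, 409, 84, 27, 13, 6, 6, 3, 2, 1, 0, 0, 0, 0, 0, 0, 0, 0, 0, 0, 0, 0],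
  [505, 505, 96, 33, 13, 7, 7, 5, 3, 2, 1, 1, 1, 1, 1, 1, 1, 1, 1, 1, 1, 1, 0],
  [628, 628, 123, 39, 17, 8, 8, 5, 4, 3, 2, 2, 1, 1, 1, 1, 1, 1, 1, 1, 1, 1, 1, 0],
  [769, 769, 141, 45, 18, 9, 9, 6, 3, 3, 2, 2, 1, 1, 1, 1, 1, 1, 1, 1, 1, 1, 1, 1, 0],
  [950, 950, 181, 58, 25, 12, 12, 7, 5, 3, 3, 3, 2, 1, 1, 1, 1, 1, 1, 1, 1, 1, 1, 1, 1, 0],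
  [1156, 1156, 206, 65, 26, 13, 13, 8, 5, 3, 2, 2, 1, 0, 0, 0, 0, 0, 0, 0, 0, 0, 0, 0, 0, 0, 0],
  [1414, 1414, 258, 77, 32, 15, 15, 9, 6, 4, 3, 3, 3, 2, 1, 1, 1, 1, 1, 1, 1, 1, 1, 1, 1, 1, 1, 0],
  [1713, 1713, 299, 93, 35, 17, 17, 10, 7, 5, 3, 3, 2, 2, 1, 1, 1, 1, 1, 1, 1, 1, 1, 1, 1, 1, 1, 1, 0],
  [2081, 2081, 368, 110, 45, 20, 20, 12, 7, 5, 4, 4, 3, 2, 2, 1, 1, 1, 1, 1, 1, 1, 1, 1, 1, 1, 1, 1, 1, 0],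
  [2505, 2505, 424, 125, 48, 22, 22, 13, 8, 5, 4, 4, 3, 2, 1, 1, 1, 1, 1, 1, 1, 1, 1, 1, 1, 1, 1, 1, 1, 1, 0],
  [3026, 3026, 521, 153, 60, 28, 28, 16, 10, 6, 4, 4, 3, 2, 1, 0, 0, 0, 0, 0, 0, 0, 0, 0, 0, 0, 0, 0, 0, 0, 0, 0]]

def tabf (n s : ℕ) : ℕ := (tabL.getD n []).getD s 0

def aa : ℕ → ℕ
  | 1 => 600 | 2 => 500 | 3 => 1250 | 4 => 4000 | 5 => 16000 | 6 => 80000 | 7 => 350000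
  | _ => 0

def TT (n s : ℕ) : ℕ :=
  if n ≤ 30 then 600 * tabf n (min s (n+1))
  else if s ≤ 7 then aa s * cc (n - 4*(s-1))
  else 600 * cc (n + 2 - 2*s)

lemma decide1 : ∀ n ∈ Finset.range 31, ∀ s ∈ Finset.range 31, 1 ≤ s → s ≤ n → ¬ 5 ∣ s →
    TT (n-s) s + TT n (s+1) ≤ TT n s := by decide

lemma decide2 : ∀ n ∈ Finset.range 30, ∀ s ∈ Finset.range 31, 1 ≤ s → s ≤ n + 31 → ¬ 5 ∣ s →
    (8 ≤ s → 2*s ≤ n + 31) → TT (n+31-s) s + TT (n+31) (s+1) ≤ TT (n+31) s := by decide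

lemma decide3 : ∀ n ∈ Finset.range 31, ∀ s ∈ Finset.range 31, 1 ≤ s → s ≤ n → 5 ∣ s →
    TT n (s+1) ≤ TT n s := by decide

lemma decide4 : ∀ n ∈ Finset.range 31, TT n 1 ≤ 600 * cc n := by decide

lemma ind4 {P : ℕ → Prop} (m0 : ℕ) (base : ∀ m, m0 ≤ m → m ≤ m0 + 3 → P m)
    (step : ∀ m, m0 ≤ m → P m → P (m + 4)) : ∀ m, m0 ≤ m → P m := by
  intro m hm
  induction m using Nat.strong_induction_on with
  | _ m IH =>
    rcases le_or_gt m (m0 + 3) with h | h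
    · exact base m hm h
    · have h4 : m - 4 + 4 = m := by omega
      have := step (m-4) (by omega) (IH (m-4) (by omega) (by omega))
      rwa [h4] at this

lemma cc_tail : ∀ m, 2 ≤ m → cc (m - 8) + cc (m - 2) ≤ cc m := by
  intro m hm
  rcases le_or_gt m 13 with h | h
  · interval_cases m <;> decide
  · have key : ∀ m, 10 ≤ m → cc (m - 8) + cc (m - 2) ≤ cc m := by
      refine ind4 10 (by decide) ?_
      intro m hm IH
      have e1 : cc (m + 4 - 8) = 5 * cc (m - 8) := by
        have h1 : m + 4 - 8 = (m - 8) + 4 := by omega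
        rw [h1, cc_add4 _ (by omega)]
      have e2 : cc (m + 4 - 2) = 5 * cc (m - 2) := by
        have h1 : m + 4 - 2 = (m - 2) + 4 := by omega
        rw [h1, cc_add4 _ (by omega)]
      have e3 : cc (m + 4) = 5 * cc m := cc_add4 m (by omega)
      omega
    exact key m (by omega)

lemma L1 : ∀ n, 61 ≤ n → 600 * cc (n - 1) + 500 * cc (n - 4) ≤ 600 * cc (n - 0) := by
  refine ind4 61 (fun m h1 h2 => by interval_cases m <;> decide) ?_
  intro n hn IH
  have e1 : cc (n + 4 - 1) = 5 * cc (n - 1) := by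
    have h1 : n + 4 - 1 = (n - 1) + 4 := by omega
    rw [h1, cc_add4 _ (by omega)]
  have e2 : cc (n + 4 - 4) = 5 * cc (n - 4) := by
    have h1 : n + 4 - 4 = (n - 4) + 4 := by omega
    rw [h1, cc_add4 _ (by omega)]
  have e3 : cc (n + 4 - 0) = 5 * cc (n - 0) := by
    have h1 : n + 4 - 0 = (n - 0) + 4 := by omega
    rw [h1, cc_add4 _ (by omega)]
  omega

lemma L2 : ∀ n, 61 ≤ n → 500 * cc (n - 6) + 1250 * cc (n - 8) ≤ 500 * cc (n - 4) := by
  refine ind4 61 (fun m h1 h2 => by interval_cases m <;> decide) ?_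
  intro n hn IH
  have e1 : cc (n + 4 - 6) = 5 * cc (n - 6) := by
    have h1 : n + 4 - 6 = (n - 6) + 4 := by omega
    rw [h1, cc_add4 _ (by omega)]
  have e2 : cc (n + 4 - 8) = 5 * cc (n - 8) := by
    have h1 : n + 4 - 8 = (n - 8) + 4 := by omega
    rw [h1, cc_add4 _ (by omega)]
  have e3 : cc (n + 4 - 4) = 5 * cc (n - 4) := by
    have h1 : n + 4 - 4 = (n - 4) + 4 := by omega
    rw [h1, cc_add4 _ (by omega)]
  omega

lemma L3 : ∀ n, 61 ≤ n → 1250 * cc (n - 11) + 4000 * cc (n - 12) ≤ 1250 * cc (n - 8) := by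
  refine ind4 61 (fun m h1 h2 => by interval_cases m <;> decide) ?_
  intro n hn IH
  have e1 : cc (n + 4 - 11) = 5 * cc (n - 11) := by
    have h1 : n + 4 - 11 = (n - 11) + 4 := by omega
    rw [h1, cc_add4 _ (by omega)]
  have e2 : cc (n + 4 - 12) = 5 * cc (n - 12) := by
    have h1 : n + 4 - 12 = (n - 12) + 4 := by omega
    rw [h1, cc_add4 _ (by omega)]
  have e3 : cc (n + 4 - 8) = 5 * cc (n - 8) := by
    have h1 : n + 4 - 8 = (n - 8) + 4 := by omega
    rw [h1, cc_add4 _ (by omega)]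
  omega

lemma L6 : ∀ n, 61 ≤ n → 80000 * cc (n - 26) + 350000 * cc (n - 24) ≤ 80000 * cc (n - 20) := by
  refine ind4 61 (fun m h1 h2 => by interval_cases m <;> decide) ?_
  intro n hn IH
  have e1 : cc (n + 4 - 26) = 5 * cc (n - 26) := by
    have h1 : n + 4 - 26 = (n - 26) + 4 := by omega
    rw [h1, cc_add4 _ (by omega)]
  have e2 : cc (n + 4 - 24) = 5 * cc (n - 24) := by
    have h1 : n + 4 - 24 = (n - 24) + 4 := by omega
    rw [h1, cc_add4 _ (by omega)]
  have e3 : cc (n + 4 - 20) = 5 * cc (n - 20) := by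
    have h1 : n + 4 - 20 = (n - 20) + 4 := by omega
    rw [h1, cc_add4 _ (by omega)]
  omega

lemma L7 : ∀ n, 61 ≤ n → 350000 * cc (n - 31) + 600 * cc (n - 14) ≤ 350000 * cc (n - 24) := by
  refine ind4 61 (fun m h1 h2 => by interval_cases m <;> decide) ?_
  intro n hn IH
  have e1 : cc (n + 4 - 31) = 5 * cc (n - 31) := by
    have h1 : n + 4 - 31 = (n - 31) + 4 := by omega
    rw [h1, cc_add4 _ (by omega)]
  have e2 : cc (n + 4 - 14) = 5 * cc (n - 14) := by
    have h1 : n + 4 - 14 = (n - 14) + 4 := by omega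
    rw [h1, cc_add4 _ (by omega)]
  have e3 : cc (n + 4 - 24) = 5 * cc (n - 24) := by
    have h1 : n + 4 - 24 = (n - 24) + 4 := by omega
    rw [h1, cc_add4 _ (by omega)]
  omega

lemma TT_big (n s : ℕ) (hn : 31 ≤ n) (hs : s ≤ 7) : TT n s = aa s * cc (n - 4*(s-1)) := by
  unfold TT; rw [if_neg (by omega), if_pos hs]

lemma TT_tail (n s : ℕ) (hn : 31 ≤ n) (hs : 8 ≤ s) : TT n s = 600 * cc (n + 2 - 2*s) := by
  unfold TT; rw [if_neg (by omega), if_neg (by omega)]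

lemma Tstep (n s : ℕ) (hs : 1 ≤ s) (hsn : s ≤ n) (h5 : ¬ 5 ∣ s) (hd : 31 ≤ n → 8 ≤ s → 2*s ≤ n) :
    TT (n-s) s + TT n (s+1) ≤ TT n s := by
  rcases le_or_gt n 30 with hn | hn
  · exact decide1 n (by simp; omega) s (by simp; omega) hs hsn h5
  rcases le_or_gt n 60 with hn2 | hn2
  · have hs31 : s < 31 := by
      rcases le_or_gt 8 s with h | h
      · have := hd (by omega) h; omega
      · omega
    have := decide2 (n-31) (by simp; omega) s (by simp; omega) hs (by omega) h5 (by omega)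
    have e : n - 31 + 31 = n := by omega
    rwa [e] at this
  rcases le_or_gt s 7 with hs7 | hs7
  · have hb1 : TT (n-s) s = aa s * cc (n - s - 4*(s-1)) := TT_big _ _ (by omega) hs7
    interval_cases s
    · rw [hb1, TT_big n 1 (by omega) (by norm_num), TT_big n 2 (by omega) (by norm_num)]
      have e1 : n - 1 - 4*(1-1) = n - 1 := by omega
      have e2 : n - 4*(2-1) = n - 4 := by omega
      have e3 : n - 4*(1-1) = n - 0 := by omega
      rw [e1, e2, e3]
      exact L1 n (by omega)
    · rw [hb1, TT_big n 2 (by omega) (by norm_num), TT_big n 3 (by omega) (by norm_num)]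
      have e1 : n - 2 - 4*(2-1) = n - 6 := by omega
      have e2 : n - 4*(3-1) = n - 8 := by omega
      have e3 : n - 4*(2-1) = n - 4 := by omega
      rw [e1, e2, e3]
      exact L2 n (by omega)
    · rw [hb1, TT_big n 3 (by omega) (by norm_num), TT_big n 4 (by omega) (by norm_num)]
      have e1 : n - 3 - 4*(3-1) = n - 11 := by omega
      have e2 : n - 4*(4-1) = n - 12 := by omega
      have e3 : n - 4*(3-1) = n - 8 := by omega
      rw [e1, e2, e3]
      exact L3 n (by omega)
    · rw [hb1, TT_big n 4 (by omega) (by norm_num), TT_big n 5 (by omega) (by norm_num)]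
      have e1 : n - 4 - 4*(4-1) = n - 16 := by omega
      have e2 : n - 4*(5-1) = n - 16 := by omega
      have e3 : n - 4*(4-1) = n - 12 := by omega
      rw [e1, e2, e3]
      have e4 : cc (n - 12) = 5 * cc (n - 16) := by
        have h1 : n - 12 = (n - 16) + 4 := by omega
        rw [h1, cc_add4 _ (by omega)]
      show (4000:ℕ) * cc (n-16) + 16000 * cc (n-16) ≤ 4000 * cc (n-12)
      omega
    · exact absurd (by norm_num) h5
    · rw [hb1, TT_big n 6 (by omega) (by norm_num), TT_big n 7 (by omega) (by norm_num)]
      have e1 : n - 6 - 4*(6-1) = n - 26 := by omega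
      have e2 : n - 4*(7-1) = n - 24 := by omega
      have e3 : n - 4*(6-1) = n - 20 := by omega
      rw [e1, e2, e3]
      exact L6 n (by omega)
    · rw [hb1, TT_big n 7 (by omega) (by norm_num), TT_tail n 8 (by omega) (by norm_num)]
      have e1 : n - 7 - 4*(7-1) = n - 31 := by omega
      have e2 : n + 2 - 2*8 = n - 14 := by omega
      have e3 : n - 4*(7-1) = n - 24 := by omega
      rw [e1, e2, e3]
      exact L7 n (by omega)
  · have h2s : 2*s ≤ n := hd (by omega) (by omega)
    rw [TT_tail (n-s) s (by omega) (by omega), TT_tail n (s+1) (by omega) (by omega),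
      TT_tail n s (by omega) (by omega)]
    set m := n + 2 - 2*s with hm
    have e1 : n - s + 2 - 2*s ≤ m - 8 := by omega
    have e2 : n + 2 - 2*(s+1) = m - 2 := by omega
    rw [e2]
    have h1 : cc (n - s + 2 - 2*s) ≤ cc (m - 8) := cc_mono e1
    have h2 : cc (m - 8) + cc (m - 2) ≤ cc m := cc_tail m (by omega)
    omega

lemma Tmono5 (n s : ℕ) (hs : 1 ≤ s) (hsn : s ≤ n) (h5 : 5 ∣ s) : TT n (s+1) ≤ TT n s := by
  rcases le_or_gt n 30 with hn | hn
  · exact decide3 n (by simp; omega) s (by simp; omega) hs hsn h5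
  rcases eq_or_ne s 5 with rfl | hs5
  · rw [TT_big n 5 (by omega) (by norm_num), TT_big n 6 (by omega) (by norm_num)]
    have e1 : n - 4*(5-1) = (n - 20) + 4 := by omega
    have e2 : n - 4*(6-1) = n - 20 := by omega
    rw [e1, e2, cc_add4 _ (by omega)]
    show (80000:ℕ) * cc (n-20) ≤ 16000 * (5 * cc (n - 20))
    omega
  · have hs10 : 10 ≤ s := by
      rcases h5 with ⟨k, rfl⟩; omega
    rw [TT_tail n (s+1) (by omega) (by omega), TT_tail n s (by omega) (by omega)]
    have h1 : cc (n + 2 - 2*(s+1)) ≤ cc (n + 2 - 2*s) := cc_mono (by omega)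
    omega

lemma TT_le_cc (n : ℕ) : TT n 1 ≤ 600 * cc n := by
  rcases le_or_gt n 30 with hn | hn
  · exact decide4 n (by simp; omega)
  · rw [TT_big n 1 (by omega) (by norm_num)]
    have e : n - 4*(1-1) = n := by omega
    rw [e]
    show (600:ℕ) * cc n ≤ 600 * cc n
    exact le_refl _

lemma TT_zero (s : ℕ) (hs : 1 ≤ s) : TT 0 s = 600 := by
  have e : min s 1 = 1 := by omega
  simp [TT, tabf, e]
  rfl

lemma TT_diag (n s : ℕ) (hn : 31 ≤ n) (hs : 8 ≤ s) : 600 ≤ TT n s := by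
  rw [TT_tail n s hn hs]
  have := cc_pos (n + 2 - 2*s)
  omega




lemma Np_zero (s : ℕ) : Np 0 s = 1 := by
  unfold Np
  rw [Finset.filter_true_of_mem, Finset.card_univ, Fintype.card_unique]
  intro μ _
  simp [Nat.Partition.partition_zero_parts]

lemma Np_high {n s : ℕ} (h1 : 1 ≤ n) (h2 : n < s) : Np n s = 0 := by
  unfold Np
  rw [Finset.card_eq_zero, Finset.filter_eq_empty_iff]
  rintro μ - ⟨-, hge⟩
  have hne : μ.parts ≠ 0 := by
    intro h
    have := μ.parts_sum
    rw [h] at this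
    simp at this
    omega
  obtain ⟨i, hi⟩ := Multiset.exists_mem_of_ne_zero hne
  obtain ⟨t, ht⟩ := Multiset.exists_cons_of_mem hi
  have hsum := μ.parts_sum
  rw [ht, Multiset.sum_cons] at hsum
  have := hge i hi
  omega

lemma Np_five {n s : ℕ} (h : 5 ∣ s) : Np n s = Np n (s+1) := by
  unfold Np
  congr 1
  apply Finset.filter_congr
  intro μ _
  constructor
  · rintro ⟨hreg, hge⟩
    refine ⟨hreg, fun i hi => ?_⟩
    have h1 := hge i hi
    have h2 : i ≠ s := by
      rintro rfl
      exact hreg i hi h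
    omega
  · rintro ⟨hreg, hge⟩
    exact ⟨hreg, fun i hi => le_trans (Nat.le_succ s) (hge i hi)⟩

lemma Np_rec {n s : ℕ} (hs : 1 ≤ s) (hsn : s ≤ n) (h5 : ¬ 5 ∣ s) :
    Np n s = Np (n - s) s + Np n (s+1) := by
  classical
  set P : n.Partition → Prop :=
    fun μ => (∀ i ∈ μ.parts, ¬ 5 ∣ i) ∧ ∀ i ∈ μ.parts, s ≤ i with hP
  have key := Finset.card_filter_add_card_filter_not
    (s := Finset.univ.filter P) (p := fun μ => s ∈ μ.parts)
  rw [Finset.filter_filter, Finset.filter_filter] at key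
  have hNp : Np n s = (Finset.univ.filter P).card := rfl
  have sumA : ∀ μ : n.Partition, s ∈ μ.parts → (μ.parts.erase s).sum = n - s := by
    intro μ hmem
    have hce : s ::ₘ μ.parts.erase s = μ.parts := Multiset.cons_erase hmem
    have hsum := μ.parts_sum
    rw [← hce, Multiset.sum_cons] at hsum
    omega
  have hA : (Finset.univ.filter (fun μ => P μ ∧ s ∈ μ.parts)).card =
      (Finset.univ.filter
        (fun ν : (n-s).Partition => (∀ i ∈ ν.parts, ¬ 5 ∣ i) ∧ ∀ i ∈ ν.parts, s ≤ i)).card := by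
    refine Finset.card_bij'
      (fun μ hμ => ⟨μ.parts.erase s,
        fun hi => μ.parts_pos (Multiset.mem_of_mem_erase hi),
        sumA μ (Finset.mem_filter.mp hμ).2.2⟩)
      (fun ν hν => ⟨s ::ₘ ν.parts,
        fun {i} hi => by
          rcases Multiset.mem_cons.mp hi with rfl | hi'
          · omega
          · exact ν.parts_pos hi',
        by rw [Multiset.sum_cons, ν.parts_sum]; omega⟩)
      ?_ ?_ ?_ ?_
    · intro μ hμ
      obtain ⟨-, ⟨hreg, hge⟩, hmem⟩ := Finset.mem_filter.mp hμ
      exact Finset.mem_filter.mpr ⟨Finset.mem_univ _,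
        fun i hi => hreg i (Multiset.mem_of_mem_erase hi),
        fun i hi => hge i (Multiset.mem_of_mem_erase hi)⟩
    · intro ν hν
      obtain ⟨-, hreg, hge⟩ := Finset.mem_filter.mp hν
      refine Finset.mem_filter.mpr ⟨Finset.mem_univ _, ⟨⟨fun i hi => ?_, fun i hi => ?_⟩, ?_⟩⟩
      · rcases Multiset.mem_cons.mp hi with rfl | hi'
        · exact h5
        · exact hreg i hi'
      · rcases Multiset.mem_cons.mp hi with rfl | hi'
        · exact le_refl _
        · exact hge i hi'
      · exact Multiset.mem_cons_self _ _
    · intro μ hμ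
      apply Nat.Partition.ext
      exact Multiset.cons_erase (Finset.mem_filter.mp hμ).2.2
    · intro ν hν
      apply Nat.Partition.ext
      exact Multiset.erase_cons_head _ _
  have hB : (Finset.univ.filter (fun μ => P μ ∧ ¬ s ∈ μ.parts)).card =
      (Finset.univ.filter
        (fun μ : n.Partition => (∀ i ∈ μ.parts, ¬ 5 ∣ i) ∧ ∀ i ∈ μ.parts, s + 1 ≤ i)).card := by
    congr 1
    apply Finset.filter_congr
    intro μ _
    constructor
    · rintro ⟨⟨hreg, hge⟩, hnot⟩
      refine ⟨hreg, fun i hi => ?_⟩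
      have h1 := hge i hi
      have h2 : i ≠ s := fun h => hnot (h ▸ hi)
      omega
    · rintro ⟨hreg, hge⟩
      refine ⟨⟨hreg, fun i hi => le_trans (Nat.le_succ s) (hge i hi)⟩, fun hmem => ?_⟩
      have := hge s hmem
      omega
  have hA' : Np (n - s) s = (Finset.univ.filter
      (fun ν : (n-s).Partition => (∀ i ∈ ν.parts, ¬ 5 ∣ i) ∧ ∀ i ∈ ν.parts, s ≤ i)).card := rfl
  have hB' : Np n (s+1) = (Finset.univ.filter
      (fun μ : n.Partition => (∀ i ∈ μ.parts, ¬ 5 ∣ i) ∧ ∀ i ∈ μ.parts, s + 1 ≤ i)).card := rfl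
  omega

lemma NpV_0_1 : Np 0 1 = 1 := Np_zero 1
lemma NpV_1_2 : Np 1 2 = 0 := Np_high (by norm_num) (by norm_num)
lemma NpV_1_1 : Np 1 1 = 1 := by
  rw [Np_rec (by norm_num) (by norm_num) (by norm_num)]; norm_num [NpV_0_1, NpV_1_2]
lemma NpV_0_2 : Np 0 2 = 1 := Np_zero 2
lemma NpV_2_3 : Np 2 3 = 0 := Np_high (by norm_num) (by norm_num)
lemma NpV_2_2 : Np 2 2 = 1 := by
  rw [Np_rec (by norm_num) (by norm_num) (by norm_num)]; norm_num [NpV_0_2, NpV_2_3]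
lemma NpV_2_1 : Np 2 1 = 2 := by
  rw [Np_rec (by norm_num) (by norm_num) (by norm_num)]; norm_num [NpV_1_1, NpV_2_2]
lemma NpV_0_3 : Np 0 3 = 1 := Np_zero 3
lemma NpV_3_4 : Np 3 4 = 0 := Np_high (by norm_num) (by norm_num)
lemma NpV_3_3 : Np 3 3 = 1 := by
  rw [Np_rec (by norm_num) (by norm_num) (by norm_num)]; norm_num [NpV_0_3, NpV_3_4]
lemma NpV_3_2 : Np 3 2 = 1 := by
  rw [Np_rec (by norm_num) (by norm_num) (by norm_num)]; norm_num [NpV_1_2, NpV_3_3]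
lemma NpV_3_1 : Np 3 1 = 3 := by
  rw [Np_rec (by norm_num) (by norm_num) (by norm_num)]; norm_num [NpV_2_1, NpV_3_2]
lemma NpV_1_3 : Np 1 3 = 0 := Np_high (by norm_num) (by norm_num)
lemma NpV_0_4 : Np 0 4 = 1 := Np_zero 4
lemma NpV_4_5 : Np 4 5 = 0 := Np_high (by norm_num) (by norm_num)
lemma NpV_4_4 : Np 4 4 = 1 := by
  rw [Np_rec (by norm_num) (by norm_num) (by norm_num)]; norm_num [NpV_0_4, NpV_4_5]
lemma NpV_4_3 : Np 4 3 = 1 := by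
  rw [Np_rec (by norm_num) (by norm_num) (by norm_num)]; norm_num [NpV_1_3, NpV_4_4]
lemma NpV_4_2 : Np 4 2 = 2 := by
  rw [Np_rec (by norm_num) (by norm_num) (by norm_num)]; norm_num [NpV_2_2, NpV_4_3]
lemma NpV_4_1 : Np 4 1 = 5 := by
  rw [Np_rec (by norm_num) (by norm_num) (by norm_num)]; norm_num [NpV_3_1, NpV_4_2]
lemma NpV_1_4 : Np 1 4 = 0 := Np_high (by norm_num) (by norm_num)
lemma NpV_5_6 : Np 5 6 = 0 := Np_high (by norm_num) (by norm_num)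
lemma NpV_5_5 : Np 5 5 = 0 := by
  rw [Np_five (by norm_num)]; norm_num [NpV_5_6]
lemma NpV_5_4 : Np 5 4 = 0 := by
  rw [Np_rec (by norm_num) (by norm_num) (by norm_num)]; norm_num [NpV_1_4, NpV_5_5]
lemma NpV_5_3 : Np 5 3 = 0 := by
  rw [Np_rec (by norm_num) (by norm_num) (by norm_num)]; norm_num [NpV_2_3, NpV_5_4]
lemma NpV_5_2 : Np 5 2 = 1 := by
  rw [Np_rec (by norm_num) (by norm_num) (by norm_num)]; norm_num [NpV_3_2, NpV_5_3]
lemma NpV_5_1 : Np 5 1 = 6 := by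
  rw [Np_rec (by norm_num) (by norm_num) (by norm_num)]; norm_num [NpV_4_1, NpV_5_2]

lemma Np_diag {n s : ℕ} (h1 : 1 ≤ n) (h2 : n + 1 ≤ 2*s) : Np n s ≤ 1 := by
  unfold Np
  apply Finset.card_le_one.mpr
  have hparts : ∀ μ : n.Partition, (∀ i ∈ μ.parts, s ≤ i) → μ.parts = {n} := by
    intro μ hge
    have hne : μ.parts ≠ 0 := by
      intro h
      have := μ.parts_sum
      rw [h] at this
      simp at this
      omega
    obtain ⟨i, hi⟩ := Multiset.exists_mem_of_ne_zero hne
    obtain ⟨t, ht⟩ := Multiset.exists_cons_of_mem hi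
    rcases eq_or_ne t 0 with rfl | htne
    · have hsum := μ.parts_sum
      rw [ht] at hsum ⊢
      simp at hsum
      rw [hsum]
      rfl
    · exfalso
      obtain ⟨j, hj⟩ := Multiset.exists_mem_of_ne_zero htne
      obtain ⟨u, hu⟩ := Multiset.exists_cons_of_mem hj
      have hsum := μ.parts_sum
      rw [ht, hu, Multiset.sum_cons, Multiset.sum_cons] at hsum
      have hgi := hge i hi
      have hgj := hge j (by rw [ht]; exact Multiset.mem_cons_of_mem hj)
      omega
  intro μ hμ ν hν
  obtain ⟨-, -, hμge⟩ := Finset.mem_filter.mp hμ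
  obtain ⟨-, -, hνge⟩ := Finset.mem_filter.mp hν
  apply Nat.Partition.ext
  rw [hparts μ hμge, hparts ν hνge]

lemma main_bound : ∀ k n s, 1 ≤ s → 3*n < k + s → 600 * Np n s ≤ TT n s := by
  intro k
  induction k using Nat.strong_induction_on with
  | _ k IH =>
    intro n s hs hk
    rcases Nat.eq_zero_or_pos n with rfl | hn
    · rw [Np_zero, TT_zero s hs]
    rcases lt_or_ge n s with hlt | hsn
    · rw [Np_high hn hlt]
      simp
    have hk1 : 2*n < k := by omega
    by_cases h5 : 5 ∣ s
    · rw [Np_five h5]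
      have h1 := IH (k-1) (by omega) n (s+1) (by omega) (by omega)
      exact le_trans h1 (Tmono5 n s hs hsn h5)
    · by_cases hd : 31 ≤ n ∧ 8 ≤ s ∧ n + 1 ≤ 2*s
      · have h1 := Np_diag hn hd.2.2
        have h2 := TT_diag n s hd.1 hd.2.1
        nlinarith
      · rw [Np_rec hs hsn h5]
        have h1 := IH (k-1) (by omega) (n-s) s hs (by omega)
        have h2 := IH (k-1) (by omega) n (s+1) (by omega) (by omega)
        have h3 := Tstep n s hs hsn h5 (by omega)
        have : 600 * (Np (n-s) s + Np n (s+1)) = 600 * Np (n-s) s + 600 * Np n (s+1) := by ring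
        omega

lemma Np_le_cc (n : ℕ) : Np n 1 ≤ cc n := by
  have h1 := main_bound (3*n+1) n 1 (le_refl _) (by omega)
  have h2 := TT_le_cc n
  omega

lemma cform0 : ∀ k, 1 ≤ k → cc (4*k) = 5^k := by
  intro k hk
  induction k with
  | zero => omega
  | succ k IH =>
    rcases Nat.eq_zero_or_pos k with rfl | hk'
    · rfl
    · have e : 4*(k+1) = 4*k + 4 := by ring
      rw [e, cc_add4 _ (by omega), IH hk', pow_succ]
      ring

lemma cform1 : ∀ k, 1 ≤ k → cc (4*k+1) = 6 * 5^(k-1) := by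
  intro k hk
  induction k with
  | zero => omega
  | succ k IH =>
    rcases Nat.eq_zero_or_pos k with rfl | hk'
    · rfl
    · have e : 4*(k+1)+1 = (4*k+1) + 4 := by ring
      rw [e, cc_add4 _ (by omega), IH hk']
      have e2 : k + 1 - 1 = (k-1) + 1 := by omega
      rw [e2, pow_succ]
      ring

lemma cform2 : ∀ k, cc (4*k+2) = 2 * 5^k := by
  intro k
  induction k with
  | zero => rfl
  | succ k IH =>
    have e : 4*(k+1)+2 = (4*k+2) + 4 := by ring
    rw [e, cc_add4 _ (by omega), IH, pow_succ]
    ring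

lemma cform3 : ∀ k, cc (4*k+3) = 3 * 5^k := by
  intro k
  induction k with
  | zero => rfl
  | succ k IH =>
    have e : 4*(k+1)+3 = (4*k+3) + 4 := by ring
    rw [e, cc_add4 _ (by omega), IH, pow_succ]
    ring

lemma pk_le_cc (n : ℕ) : pk 5 n ≤ cc n := by
  rw [pk_eq_Np]; exact Np_le_cc n

lemma prod_le_ccprod (M : Multiset ℕ) : (M.map (pk 5)).prod ≤ (M.map cc).prod := by
  induction M using Multiset.induction with
  | empty => simp
  | cons a M IH =>
    rw [Multiset.map_cons, Multiset.map_cons, Multiset.prod_cons, Multiset.prod_cons]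
    exact Nat.mul_le_mul (pk_le_cc a) IH

lemma ccprod_le (M : Multiset ℕ) : (M.map cc).prod ≤ cc M.sum := by
  induction M using Multiset.induction with
  | empty => simp [show cc 0 = 1 from rfl]
  | cons a M IH =>
    rw [Multiset.map_cons, Multiset.prod_cons, Multiset.sum_cons]
    calc cc a * (M.map cc).prod ≤ cc a * cc M.sum := Nat.mul_le_mul_left _ IH
    _ ≤ cc (a + M.sum) := cc_super a M.sum

lemma pkext_le_cc {n : ℕ} (μ : n.Partition) : pkext 5 μ ≤ cc n := by
  unfold pkext
  calc (μ.parts.map (pk 5)).prod ≤ (μ.parts.map cc).prod := prod_le_ccprod _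
  _ ≤ cc μ.parts.sum := ccprod_le _
  _ = cc n := by rw [μ.parts_sum]

lemma pk52 : pk 5 2 = 2 := by rw [pk_eq_Np, NpV_2_1]
lemma pk53 : pk 5 3 = 3 := by rw [pk_eq_Np, NpV_3_1]
lemma pk54 : pk 5 4 = 5 := by rw [pk_eq_Np, NpV_4_1]

theorem maxp5_formula (n : ℕ) (hn : 2 ≤ n) :
    (n % 4 = 0 →
      IsGreatest {m : ℕ | ∃ μ : n.Partition, (∀ i ∈ μ.parts, ¬ 5 ∣ i) ∧ pkext 5 μ = m}
        (5 ^ (n / 4))) ∧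
    (n % 4 = 1 →
      IsGreatest {m : ℕ | ∃ μ : n.Partition, (∀ i ∈ μ.parts, ¬ 5 ∣ i) ∧ pkext 5 μ = m}
        (6 * 5 ^ ((n - 5) / 4))) ∧
    (n % 4 = 2 →
      IsGreatest {m : ℕ | ∃ μ : n.Partition, (∀ i ∈ μ.parts, ¬ 5 ∣ i) ∧ pkext 5 μ = m}
        (2 * 5 ^ ((n - 2) / 4))) ∧
    (n % 4 = 3 →
      IsGreatest {m : ℕ | ∃ μ : n.Partition, (∀ i ∈ μ.parts, ¬ 5 ∣ i) ∧ pkext 5 μ = m}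
        (3 * 5 ^ ((n - 3) / 4))) := by
  refine ⟨fun h4 => ⟨?_, ?_⟩, fun h4 => ⟨?_, ?_⟩, fun h4 => ⟨?_, ?_⟩, fun h4 => ⟨?_, ?_⟩⟩
  · -- membership, n % 4 = 0
    refine ⟨wit n (n/4 - 1) {4} (by intro i hi; rw [Multiset.mem_singleton] at hi; omega)
      (by rw [Multiset.sum_singleton]; omega),
      wit_reg _ _ _ _ _ (by intro i hi; rw [Multiset.mem_singleton] at hi; subst hi; norm_num),
      ?_⟩
    rw [pkext_wit, Multiset.map_singleton, Multiset.prod_singleton, pk54, ← pow_succ']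
    congr 1
    omega
  · -- upper bound, n % 4 = 0
    rintro m ⟨μ, hreg, rfl⟩
    calc pkext 5 μ ≤ cc n := pkext_le_cc μ
    _ = 5 ^ (n/4) := by
      set k := n/4 with hk
      have e : n = 4*k := by omega
      rw [e, cform0 k (by omega)]
  · -- membership, n % 4 = 1
    refine ⟨wit n ((n-1)/4 - 1) {2, 3} (by intro i hi; fin_cases hi <;> omega)
      (by rw [show ({2, 3} : Multiset ℕ).sum = 5 from rfl]; omega),
      wit_reg _ _ _ _ _ (by intro i hi; fin_cases hi <;> norm_num),
      ?_⟩
    rw [pkext_wit]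
    rw [show (({2, 3} : Multiset ℕ).map (pk 5)).prod = pk 5 2 * pk 5 3 by
      rw [Multiset.insert_eq_cons, Multiset.map_cons, Multiset.prod_cons,
        Multiset.map_singleton, Multiset.prod_singleton]]
    rw [pk52, pk53, pk54]
    rw [show (2:ℕ) * 3 = 6 from rfl]
    have e : (n-1)/4 - 1 = (n-5)/4 := by omega
    rw [e]
  · -- upper bound, n % 4 = 1
    rintro m ⟨μ, hreg, rfl⟩
    calc pkext 5 μ ≤ cc n := pkext_le_cc μ
    _ = 6 * 5 ^ ((n-5)/4) := by
      set k := (n-1)/4 with hk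
      have e : n = 4*k + 1 := by omega
      have e2 : (n-5)/4 = k - 1 := by omega
      rw [e2, e, cform1 k (by omega)]
  · -- membership, n % 4 = 2
    refine ⟨wit n ((n-2)/4) {2} (by intro i hi; rw [Multiset.mem_singleton] at hi; omega)
      (by rw [Multiset.sum_singleton]; omega),
      wit_reg _ _ _ _ _ (by intro i hi; rw [Multiset.mem_singleton] at hi; subst hi; norm_num),
      ?_⟩
    rw [pkext_wit, Multiset.map_singleton, Multiset.prod_singleton, pk52, pk54]
  · -- upper bound, n % 4 = 2
    rintro m ⟨μ, hreg, rfl⟩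
    calc pkext 5 μ ≤ cc n := pkext_le_cc μ
    _ = 2 * 5 ^ ((n-2)/4) := by
      set k := (n-2)/4 with hk
      have e : n = 4*k + 2 := by omega
      rw [e, cform2 k]
  · -- membership, n % 4 = 3
    refine ⟨wit n ((n-3)/4) {3} (by intro i hi; rw [Multiset.mem_singleton] at hi; omega)
      (by rw [Multiset.sum_singleton]; omega),
      wit_reg _ _ _ _ _ (by intro i hi; rw [Multiset.mem_singleton] at hi; subst hi; norm_num),
      ?_⟩
    rw [pkext_wit, Multiset.map_singleton, Multiset.prod_singleton, pk53, pk54]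
  · -- upper bound, n % 4 = 3
    rintro m ⟨μ, hreg, rfl⟩
    calc pkext 5 μ ≤ cc n := pkext_le_cc μ
    _ = 3 * 5 ^ ((n-3)/4) := by
      set k := (n-3)/4 with hk
      have e : n = 4*k + 3 := by omega
      rw [e, cform3 k]
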